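/- For a partition ξ = (ξ_1 ≥ ... ≥ ξ_ℓ > 0) with ℓ ≥ 2, define ξ⁻ as the partition (ξ_1, ..., ξ_{ℓ-2}, ξ_{ℓ-1} - ξ_ℓ) and ξ⁺ as the partition obtained by sorting (ξ_1, ..., ξ_{ℓ-2}, ξ_{ℓ-1}+1, ξ_ℓ-1). Then p_{ξ⁺}(x) + x^{ξ_ℓ}·p_{ξ⁻}(x) = p_ξ(x), where p_ξ(x) = Π_{i=1}^ℓ p_{ξ_i}(x). -/

import Mathlib

open Polynomial

lemma key_pn (p : ℕ → Polynomial ℤ)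
    (h0 : p 0 = 1) (h1 : p 1 = 1)
    (hrec : ∀ n : ℕ, 1 ≤ n → p (n + 1) = p n - X * p (n - 1)) :
    ∀ b a : ℕ, 1 ≤ b → b ≤ a →
      p (a + 1) * p (b - 1) + X ^ b * p (a - b) = p a * p b := by
  intro b
  induction b with
  | zero => intro a hb; omega
  | succ c ih =>
    intro a _ hba
    cases c with
    | zero =>
      simp only [Nat.sub_self, h0, h1, mul_one, pow_one]
      rw [hrec a (by omega)]
      ring
    | succ c =>
      have ha : 1 ≤ a := by omega
      have H := ih (a - 1) (by omega) (by omega)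
      have e1 : a - 1 + 1 = a := by omega
      have e2 : c + 1 - 1 = c := by omega
      have e3 : a - 1 - (c + 1) = a - (c + 1 + 1) := by omega
      rw [e1, e2, e3] at H
      have r1 := hrec a ha
      have r2 := hrec (c + 1) (by omega)
      rw [e2] at r2
      have e4 : c + 1 + 1 - 1 = c + 1 := by omega
      rw [e4, r1, r2]
      linear_combination (X : Polynomial ℤ) * H

theorem stmt_3 (p : ℕ → Polynomial ℤ)
    (h0 : p 0 = 1) (h1 : p 1 = 1)
    (hrec : ∀ n : ℕ, 1 ≤ n → p (n + 1) = p n - X * p (n - 1))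
    (l : List ℕ) (a b : ℕ)
    (hsort : List.Pairwise (· ≥ ·) (l ++ [a, b]))
    (hpos : ∀ x ∈ l ++ [a, b], 0 < x) :
    ((l ++ [a + 1, b - 1]).map p).prod + X ^ b * ((l ++ [a - b]).map p).prod
      = ((l ++ [a, b]).map p).prod := by
  have hb : 1 ≤ b := hpos b (by simp)
  have hab : List.Pairwise (· ≥ ·) [a, b] :=
    hsort.sublist (List.sublist_append_right l [a, b])
  have hba : b ≤ a := by
    rcases List.pairwise_cons.mp hab with ⟨h, _⟩
    exact h b (by simp)
  have H := key_pn p h0 h1 hrec b a hb hba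
  simp only [List.map_append, List.prod_append, List.map_cons, List.map_nil,
    List.prod_cons, List.prod_nil]
  linear_combination ((l.map p).prod) * H
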